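/- The 5-dimensional KdV map φ(v₀,v₁,v₂,v₃,v₄) = (v₁,v₂,v₃,v₄,v₅), where v₅ is determined by v₂ - v₃ = 1/v₀ - 1/v₅ (i.e. v₅ = -v₀/(v₀v₂ - v₀v₃ - 1)), preserves the function I₁ = 1/v₀ + 1/v₁ + 1/v₂ + 1/v₃ + 1/v₄ - v₂, i.e. I₁(v₁,...,v₅) = I₁(v₀,...,v₄). -/
import Mathlib

/-- The (3,-2) reduction of lattice KdV preserves I₁. -/
theorem kdv_map_preserves_I1 (v0 v1 v2 v3 v4 : ℝ)
    (h0 : v0 ≠ 0) (h1 : v1 ≠ 0) (h2 : v2 ≠ 0) (h3 : v3 ≠ 0) (h4 : v4 ≠ 0)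
    (hden : v0 * v2 - v0 * v3 - 1 ≠ 0)
    (v5 : ℝ) (hv5 : v5 = -v0 / (v0 * v2 - v0 * v3 - 1)) :
    1/v1 + 1/v2 + 1/v3 + 1/v4 + 1/v5 - v3
      = 1/v0 + 1/v1 + 1/v2 + 1/v3 + 1/v4 - v2 := by
  have : (1:ℝ)/v5 = 1/v0 - v2 + v3 := by
    rw [hv5, one_div, inv_div, div_neg, neg_eq_iff_eq_neg, div_eq_iff h0]
    field_simp
    ring
  rw [this]; ring
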